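/- Let p ∈ ℝ^{h_p} and q ∈ ℝ^{h_q} be nonnegative vectors with ∑_i p_i = ∑_j q_j = 1, and let C be a nonnegative h_p × h_q cost matrix. Then the minimum of ∑_{i,j} F_{i,j} C_{i,j} over nonnegative matrices F satisfying only the out-flow constraints ∑_j F_{i,j} = p_i for all i equals ∑_i p_i · (min_j C_{i,j}). In particular, the minimum is attained by the flow that sends all of p_i to a column j minimizing C_{i,j}. -/
import Mathlib


/-- One-sided RWMD: with only out-flow constraints, the minimum transport cost equals
`∑ i, p i * min_j C i j`, and it is attained by sending all of `p i` to a cost-minimizing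
column. -/
theorem stmt_0 (hp hq : ℕ) (p : Fin (hp + 1) → ℝ) (q : Fin (hq + 1) → ℝ)
    (hpnn : ∀ i, 0 ≤ p i) (hqnn : ∀ j, 0 ≤ q j)
    (hpsum : ∑ i, p i = 1) (hqsum : ∑ j, q j = 1)
    (C : Fin (hp + 1) → Fin (hq + 1) → ℝ) (hC : ∀ i j, 0 ≤ C i j) :
    IsLeast
      {c : ℝ | ∃ F : Fin (hp + 1) → Fin (hq + 1) → ℝ,
        (∀ i j, 0 ≤ F i j) ∧ (∀ i, ∑ j, F i j = p i) ∧
        c = ∑ i, ∑ j, F i j * C i j}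
      (∑ i, p i * Finset.univ.inf' Finset.univ_nonempty (C i)) ∧
    ∀ σ : Fin (hp + 1) → Fin (hq + 1), (∀ i j, C i (σ i) ≤ C i j) →
      (∑ i, ∑ j, (if j = σ i then p i else 0) * C i j)
        = ∑ i, p i * Finset.univ.inf' Finset.univ_nonempty (C i) := by
  have key : ∀ σ : Fin (hp + 1) → Fin (hq + 1), (∀ i j, C i (σ i) ≤ C i j) →
      (∑ i, ∑ j, (if j = σ i then p i else 0) * C i j)
        = ∑ i, p i * Finset.univ.inf' Finset.univ_nonempty (C i) := by
    intro σ hσ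
    refine Finset.sum_congr rfl fun i _ => ?_
    have h1 : ∑ j, (if j = σ i then p i else 0) * C i j = p i * C i (σ i) := by
      rw [Finset.sum_eq_single (σ i)]
      · simp
      · intro b _ hb; simp [hb]
      · simp
    rw [h1]
    congr 1
    exact le_antisymm (Finset.le_inf' _ _ fun j _ => hσ i j)
      (Finset.inf'_le _ (Finset.mem_univ _))
  constructor
  · constructor
    · -- membership
      choose σ hσ using fun i => Finset.exists_mem_eq_inf' (Finset.univ_nonempty) (C i)
      have hσmin : ∀ i j, C i (σ i) ≤ C i j := by
        intro i j
        rw [← (hσ i).2]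
        exact Finset.inf'_le _ (Finset.mem_univ _)
      refine ⟨fun i j => if j = σ i then p i else 0, ?_, ?_, (key σ hσmin).symm⟩
      · intro i j; dsimp only; split <;> simp [hpnn i]
      · intro i; simp
    · rintro c ⟨F, hFnn, hFrow, rfl⟩
      refine Finset.sum_le_sum fun i _ => ?_
      calc p i * Finset.univ.inf' Finset.univ_nonempty (C i)
          = ∑ j, F i j * Finset.univ.inf' Finset.univ_nonempty (C i) := by
            rw [← Finset.sum_mul, hFrow i]
        _ ≤ ∑ j, F i j * C i j :=
            Finset.sum_le_sum fun j _ =>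
              mul_le_mul_of_nonneg_left (Finset.inf'_le _ (Finset.mem_univ _)) (hFnn i j)
  · exact key
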